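/- Let Q be an n×n real symmetric positive semidefinite matrix with positive semidefinite square root M, let C be an m×n real matrix with rank C = m and Moore–Penrose pseudoinverse C⁺, let N = I − C⁺C, and let (MN)⁺ be the Moore–Penrose pseudoinverse of MN. Then for every ε > 0 the matrix C(Q + εI)⁻¹Cᵀ is invertible, and (C(Q + εI)⁻¹Cᵀ)⁻¹ tends to C⁺ᵀ M (I − (MN)(MN)⁺) M C⁺ as ε → 0⁺. -/

import Mathlib

open Matrix Filter

/-- `Ap` is the Moore–Penrose pseudoinverse of `A`. -/
def IsMoorePenrose {m n : ℕ} (A : Matrix (Fin m) (Fin n) ℝ)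
    (Ap : Matrix (Fin n) (Fin m) ℝ) : Prop :=
  A * Ap * A = A ∧ Ap * A * Ap = Ap ∧ (A * Ap)ᵀ = A * Ap ∧ (Ap * A)ᵀ = Ap * A

lemma aux_posdef {n : ℕ} (S : Matrix (Fin n) (Fin n) ℝ) (hS : S.PosSemidef)
    {ε : ℝ} (hε : 0 < ε) : (S + ε • (1 : Matrix (Fin n) (Fin n) ℝ)).PosDef := by
  have hd : (ε • (1 : Matrix (Fin n) (Fin n) ℝ)).PosDef := by
    rw [Matrix.smul_one_eq_diagonal]
    exact Matrix.PosDef.diagonal (fun _ => hε)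
  exact Matrix.PosDef.posSemidef_add hS hd

lemma aux_spectral (n : ℕ) (S : Matrix (Fin n) (Fin n) ℝ) (hS : S.PosSemidef) :
    ∃ P0 : Matrix (Fin n) (Fin n) ℝ, P0 * S = 0 ∧
      Tendsto (fun ε : ℝ => ε • (S + ε • (1 : Matrix (Fin n) (Fin n) ℝ))⁻¹)
        (nhdsWithin 0 (Set.Ioi 0)) (nhds P0) := by
  have hH : S.IsHermitian := hS.1
  set U : Matrix (Fin n) (Fin n) ℝ := (hH.eigenvectorUnitary : Matrix (Fin n) (Fin n) ℝ) with hUdef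
  set lam : Fin n → ℝ := hH.eigenvalues with hlam
  have hU1 : star U * U = 1 := by simp [hUdef]
  have hU2 : U * star U = 1 := by simp [hUdef]
  have hmul : ∀ D E : Matrix (Fin n) (Fin n) ℝ,
      (U * D * star U) * (U * E * star U) = U * (D * E) * star U := by
    intro D E
    have h1 : (U * D * star U) * (U * E * star U) = U * (D * ((star U * U) * (E * star U))) := by
      simp only [mul_assoc]
    rw [h1, hU1, one_mul]
    simp only [mul_assoc]
  have hspec : S = U * Matrix.diagonal lam * star U := by
    have := hH.spectral_theorem
    simpa [RCLike.ofReal_real_eq_id] using this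
  have hlam0 : ∀ i, 0 ≤ lam i := hS.eigenvalues_nonneg
  refine ⟨U * Matrix.diagonal (fun i => if lam i = 0 then (1:ℝ) else 0) * star U, ?_, ?_⟩
  · rw [hspec, hmul, Matrix.diagonal_mul_diagonal]
    have : (fun i => (if lam i = 0 then (1:ℝ) else 0) * lam i) = fun _ => 0 := by
      funext i; by_cases h : lam i = 0 <;> simp [h]
    rw [this, Matrix.diagonal_zero, mul_zero, zero_mul]
  · have hkey : ∀ ε : ℝ, 0 < ε →
        ε • (S + ε • (1 : Matrix (Fin n) (Fin n) ℝ))⁻¹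
          = U * Matrix.diagonal (fun i => ε * (lam i + ε)⁻¹) * star U := by
      intro ε hε
      have hpos : ∀ i, (0:ℝ) < lam i + ε := fun i => add_pos_of_nonneg_of_pos (hlam0 i) hε
      have hsum : S + ε • (1 : Matrix (Fin n) (Fin n) ℝ)
          = U * Matrix.diagonal (fun i => lam i + ε) * star U := by
        have h1 : U * Matrix.diagonal (fun _ : Fin n => ε) * star U
            = (ε • (1 : Matrix (Fin n) (Fin n) ℝ)) := by
          rw [← Matrix.smul_one_eq_diagonal]
          simp only [mul_smul_comm, smul_mul_assoc, mul_one]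
          rw [hU2]
        rw [hspec, ← h1, ← Matrix.add_mul, ← Matrix.mul_add, ← Matrix.diagonal_add]
      have hinv : (S + ε • (1 : Matrix (Fin n) (Fin n) ℝ))⁻¹
          = U * Matrix.diagonal (fun i => (lam i + ε)⁻¹) * star U := by
        apply Matrix.inv_eq_right_inv
        rw [hsum, hmul, Matrix.diagonal_mul_diagonal]
        have : (fun i => (lam i + ε) * (lam i + ε)⁻¹) = fun _ => (1:ℝ) := by
          funext i; exact mul_inv_cancel₀ (hpos i).ne'
        rw [this, Matrix.diagonal_one, mul_one]
        exact hU2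
      rw [hinv, ← smul_mul_assoc, ← mul_smul_comm, ← Matrix.diagonal_smul]
      congr 2
    have hdiag : Tendsto (fun ε : ℝ => Matrix.diagonal (fun i => ε * (lam i + ε)⁻¹))
        (nhdsWithin 0 (Set.Ioi 0))
        (nhds (Matrix.diagonal (fun i => if lam i = 0 then (1:ℝ) else 0))) := by
      refine tendsto_pi_nhds.mpr ?_
      intro i
      rw [tendsto_pi_nhds]
      intro j
      by_cases hij : i = j
      · subst hij
        simp only [Matrix.diagonal_apply_eq]
        by_cases h0 : lam i = 0
        · simp only [h0, if_pos rfl]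
          apply Tendsto.congr' (f₁ := fun _ => (1:ℝ))
          · filter_upwards [self_mem_nhdsWithin] with ε hε
            have hne : (ε:ℝ) ≠ 0 := (Set.mem_Ioi.mp hε).ne'
            simp [h0, mul_inv_cancel₀ hne]
          · exact tendsto_const_nhds
        · simp only [if_neg h0]
          have hposl : 0 < lam i := lt_of_le_of_ne (hlam0 i) (Ne.symm h0)
          have : Tendsto (fun ε : ℝ => ε * (lam i + ε)⁻¹) (nhds 0) (nhds (0 * (lam i + 0)⁻¹)) := by
            apply Tendsto.mul tendsto_id
            apply Tendsto.inv₀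
            · exact (continuous_const.add continuous_id).tendsto 0
            · simpa using hposl.ne'
          simpa using this.mono_left nhdsWithin_le_nhds
      · simp only [Matrix.diagonal_apply_ne _ hij]
        exact tendsto_const_nhds
    have hT : Tendsto (fun ε : ℝ => U * Matrix.diagonal (fun i => ε * (lam i + ε)⁻¹) * star U)
        (nhdsWithin 0 (Set.Ioi 0))
        (nhds (U * Matrix.diagonal (fun i => if lam i = 0 then (1:ℝ) else 0) * star U)) :=
      (tendsto_const_nhds.mul hdiag).mul tendsto_const_nhds
    apply Tendsto.congr' _ hT
    filter_upwards [self_mem_nhdsWithin] with ε hε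
    exact (hkey ε (Set.mem_Ioi.mp hε)).symm

lemma aux_right_inv {m n : ℕ} (C : Matrix (Fin m) (Fin n) ℝ) (hrank : C.rank = m)
    (Cp : Matrix (Fin n) (Fin m) ℝ) (h1 : C * Cp * C = C) : C * Cp = 1 := by
  have hrk : (C * Cᵀ).rank = m := by rw [Matrix.rank_self_mul_transpose]; exact hrank
  have hU : IsUnit (C * Cᵀ) := by
    rw [← Matrix.mulVec_surjective_iff_isUnit]
    have htop : LinearMap.range (C * Cᵀ).mulVecLin = ⊤ := by
      apply Submodule.eq_top_of_finrank_eq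
      rw [← Matrix.rank, hrk, Module.finrank_fin_fun]
    intro v
    exact LinearMap.range_eq_top.mp htop v
  have h2 : (C * Cp) * (C * Cᵀ) = 1 * (C * Cᵀ) := by
    rw [one_mul, ← Matrix.mul_assoc, h1]
  exact hU.mul_right_cancel h2

lemma aux_intertwine {n : ℕ} (B : Matrix (Fin n) (Fin n) ℝ) {ε : ℝ} (hε : 0 < ε) :
    B * (Bᵀ * B + ε • (1 : Matrix (Fin n) (Fin n) ℝ))⁻¹
      = (B * Bᵀ + ε • (1 : Matrix (Fin n) (Fin n) ℝ))⁻¹ * B := by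
  have hS : (B * Bᵀ).PosSemidef := by
    simpa [Matrix.conjTranspose_eq_transpose_of_trivial] using
      Matrix.posSemidef_self_mul_conjTranspose B
  have hS' : (Bᵀ * B).PosSemidef := by
    simpa [Matrix.conjTranspose_eq_transpose_of_trivial] using
      Matrix.posSemidef_conjTranspose_mul_self B
  have hdS : IsUnit (B * Bᵀ + ε • (1 : Matrix (Fin n) (Fin n) ℝ)).det :=
    (Matrix.isUnit_iff_isUnit_det _).mp (aux_posdef _ hS hε).isUnit
  have hdS' : IsUnit (Bᵀ * B + ε • (1 : Matrix (Fin n) (Fin n) ℝ)).det :=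
    (Matrix.isUnit_iff_isUnit_det _).mp (aux_posdef _ hS' hε).isUnit
  have hcomm : (B * Bᵀ + ε • (1 : Matrix (Fin n) (Fin n) ℝ)) * B
      = B * (Bᵀ * B + ε • (1 : Matrix (Fin n) (Fin n) ℝ)) := by
    rw [Matrix.add_mul, Matrix.mul_add, Matrix.smul_mul, Matrix.mul_smul, one_mul, mul_one,
      Matrix.mul_assoc]
  calc B * (Bᵀ * B + ε • 1)⁻¹
      = ((B * Bᵀ + ε • 1)⁻¹ * (B * Bᵀ + ε • 1)) * B * (Bᵀ * B + ε • 1)⁻¹ := by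
        rw [Matrix.nonsing_inv_mul _ hdS, one_mul]
    _ = (B * Bᵀ + ε • 1)⁻¹ * (B * (Bᵀ * B + ε • 1)) * (Bᵀ * B + ε • 1)⁻¹ := by
        rw [Matrix.mul_assoc ((B * Bᵀ + ε • 1)⁻¹), hcomm]
    _ = (B * Bᵀ + ε • 1)⁻¹ * B := by
        rw [Matrix.mul_assoc, Matrix.mul_assoc, Matrix.mul_nonsing_inv _ hdS', mul_one]

/-- For ε > 0 the matrix C(Q+εI)⁻¹Cᵀ is invertible, and its inverse converges to
R = C⁺ᵀ M (I − (MN)(MN)⁺) M C⁺ as ε → 0⁺. -/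
theorem regularized_image_limit (n m : ℕ)
    (Q M : Matrix (Fin n) (Fin n) ℝ) (hQ : Q.PosSemidef)
    (hM : M.PosSemidef) (hMsq : M * M = Q)
    (C : Matrix (Fin m) (Fin n) ℝ) (hrankC : C.rank = m)
    (Cp : Matrix (Fin n) (Fin m) ℝ) (hCp : IsMoorePenrose C Cp)
    (N : Matrix (Fin n) (Fin n) ℝ) (hN : N = 1 - Cp * C)
    (MNp : Matrix (Fin n) (Fin n) ℝ) (hMNp : IsMoorePenrose (M * N) MNp) :
    (∀ ε : ℝ, 0 < ε →
      IsUnit (C * (Q + ε • (1 : Matrix (Fin n) (Fin n) ℝ))⁻¹ * Cᵀ)) ∧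
    Tendsto (fun ε : ℝ => (C * (Q + ε • (1 : Matrix (Fin n) (Fin n) ℝ))⁻¹ * Cᵀ)⁻¹)
      (nhdsWithin 0 (Set.Ioi 0))
      (nhds (Cpᵀ * M * (1 - M * N * MNp) * M * Cp)) := by
  obtain ⟨h1, h2, h3, h4⟩ := hCp
  obtain ⟨g1, g2, g3, g4⟩ := hMNp
  have hMt : Mᵀ = M := by
    have h5 : Mᴴ = M := hM.1
    rwa [Matrix.conjTranspose_eq_transpose_of_trivial] at h5
  have hNt : Nᵀ = N := by rw [hN, Matrix.transpose_sub, Matrix.transpose_one, h4]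
  have eCC : Cp * C * (Cp * C) = Cp * C := by rw [← Matrix.mul_assoc, h2]
  have hNN : N * N = N := by
    rw [hN, Matrix.sub_mul, Matrix.one_mul, Matrix.mul_sub, Matrix.mul_one, eCC]
    abel
  have hCN : C * N = 0 := by
    rw [hN, Matrix.mul_sub, Matrix.mul_one, ← Matrix.mul_assoc, h1, sub_self]
  have hCC : C * Cp = 1 := aux_right_inv C hrankC Cp h1
  have hCpC : Cp * C = 1 - N := by rw [hN, sub_sub_cancel]
  have hCtCpt : Cᵀ * Cpᵀ = 1 - N := by rw [← Matrix.transpose_mul, h4, hCpC]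
  set B := M * N with hB
  set P := B * MNp with hP
  have hBt : Bᵀ = N * M := by rw [hB, Matrix.transpose_mul, hNt, hMt]
  have hBN : B * N = B := by rw [hB, Matrix.mul_assoc, hNN]
  have hNBt : N * Bᵀ = Bᵀ := by rw [hBt, ← Matrix.mul_assoc, hNN]
  have hQN : Q * N = M * B := by rw [← hMsq, Matrix.mul_assoc]
  have hNQ : N * Q = Bᵀ * M := by rw [← hMsq, ← Matrix.mul_assoc, ← hBt]
  have hBtP : Bᵀ * P = Bᵀ := by
    have h5 := congrArg Matrix.transpose g1
    rw [Matrix.transpose_mul, g3] at h5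
    exact h5
  have hSP : (B * Bᵀ) * P = B * Bᵀ := by rw [Matrix.mul_assoc, hBtP]
  have hSX : (B * Bᵀ) * (MNpᵀ * MNp) = P := by
    have e1 : Bᵀ * MNpᵀ = MNp * B := by rw [← Matrix.transpose_mul, g4]
    calc B * Bᵀ * (MNpᵀ * MNp) = B * (Bᵀ * MNpᵀ * MNp) := by
          simp only [Matrix.mul_assoc]
      _ = B * (MNp * B * MNp) := by rw [e1]
      _ = B * MNp := by rw [g2]
      _ = P := by rw [hP]
  have hSpsd : (B * Bᵀ).PosSemidef := by
    simpa [Matrix.conjTranspose_eq_transpose_of_trivial] using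
      Matrix.posSemidef_self_mul_conjTranspose B
  have hS'psd : (Bᵀ * B).PosSemidef := by
    simpa [Matrix.conjTranspose_eq_transpose_of_trivial] using
      Matrix.posSemidef_conjTranspose_mul_self B
  obtain ⟨P1, hP1S, hP1T⟩ := aux_spectral n (B * Bᵀ) hSpsd
  obtain ⟨P2, _, hP2T⟩ := aux_spectral n (Bᵀ * B) hS'psd
  -- P1 = 1 - P
  have hPe : ∀ ε : ℝ, 0 < ε →
      (ε • (B * Bᵀ + ε • (1 : Matrix (Fin n) (Fin n) ℝ))⁻¹) * P
        = ε • (B * Bᵀ + ε • (1 : Matrix (Fin n) (Fin n) ℝ))⁻¹ - (1 - P) := by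
    intro ε hε
    have hdS : IsUnit (B * Bᵀ + ε • (1 : Matrix (Fin n) (Fin n) ℝ)).det :=
      (Matrix.isUnit_iff_isUnit_det _).mp (aux_posdef _ hSpsd hε).isUnit
    have a1 : (B * Bᵀ) * (1 - P) = 0 := by
      rw [Matrix.mul_sub, Matrix.mul_one, hSP, sub_self]
    have h0 : (B * Bᵀ + ε • (1 : Matrix (Fin n) (Fin n) ℝ)) * (1 - P) = ε • (1 - P) := by
      rw [Matrix.add_mul, a1, zero_add, Matrix.smul_mul, one_mul]
    have h5 : 1 - P = (ε • (B * Bᵀ + ε • (1 : Matrix (Fin n) (Fin n) ℝ))⁻¹) * (1 - P) := by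
      calc 1 - P = ((B * Bᵀ + ε • 1)⁻¹ * (B * Bᵀ + ε • 1)) * (1 - P) := by
            rw [Matrix.nonsing_inv_mul _ hdS, one_mul]
        _ = (B * Bᵀ + ε • 1)⁻¹ * ((B * Bᵀ + ε • 1) * (1 - P)) := by rw [Matrix.mul_assoc]
        _ = (B * Bᵀ + ε • 1)⁻¹ * (ε • (1 - P)) := by rw [h0]
        _ = (ε • (B * Bᵀ + ε • 1)⁻¹) * (1 - P) := by
            rw [Matrix.mul_smul, Matrix.smul_mul]
    rw [Matrix.mul_sub, Matrix.mul_one] at h5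
    rw [h5]
    abel
  have hPP1 : P1 * P = P1 - (1 - P) := by
    have tl : Tendsto (fun ε : ℝ => (ε • (B * Bᵀ + ε • (1 : Matrix (Fin n) (Fin n) ℝ))⁻¹) * P)
        (nhdsWithin 0 (Set.Ioi 0)) (nhds (P1 * P)) := hP1T.mul tendsto_const_nhds
    have tr : Tendsto (fun ε : ℝ => (ε • (B * Bᵀ + ε • (1 : Matrix (Fin n) (Fin n) ℝ))⁻¹) * P)
        (nhdsWithin 0 (Set.Ioi 0)) (nhds (P1 - (1 - P))) := by
      apply Tendsto.congr' _ (hP1T.sub tendsto_const_nhds)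
      filter_upwards [self_mem_nhdsWithin] with ε hε
      exact (hPe ε (Set.mem_Ioi.mp hε)).symm
    exact tendsto_nhds_unique tl tr
  have hP1PZ : P1 * P = 0 := by
    rw [← hSX, ← Matrix.mul_assoc, hP1S, Matrix.zero_mul]
  have hP1eq : P1 = 1 - P := by
    have h5 := hPP1
    rw [hP1PZ] at h5
    exact sub_eq_zero.mp h5.symm
  -- key algebraic identity for each ε > 0
  have key : ∀ ε : ℝ, 0 < ε →
      (C * (Q + ε • (1 : Matrix (Fin n) (Fin n) ℝ))⁻¹ * Cᵀ) *
        (Cpᵀ * (Q + ε • (1 : Matrix (Fin n) (Fin n) ℝ)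
          - (M * ((1 - ε • (B * Bᵀ + ε • (1 : Matrix (Fin n) (Fin n) ℝ))⁻¹) * M)
            + M * ((ε • (B * Bᵀ + ε • (1 : Matrix (Fin n) (Fin n) ℝ))⁻¹) * (B * N))
            + N * (Bᵀ * ((ε • (B * Bᵀ + ε • (1 : Matrix (Fin n) (Fin n) ℝ))⁻¹) * M))
            + ε • (N * ((ε • (Bᵀ * B + ε • (1 : Matrix (Fin n) (Fin n) ℝ))⁻¹) * N)))) * Cp)
        = 1 := by
    intro ε hε
    have hApd : (Q + ε • (1 : Matrix (Fin n) (Fin n) ℝ)).PosDef := aux_posdef Q hQ hε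
    have hdA : IsUnit (Q + ε • (1 : Matrix (Fin n) (Fin n) ℝ)).det :=
      (Matrix.isUnit_iff_isUnit_det _).mp hApd.isUnit
    have hdS : IsUnit (B * Bᵀ + ε • (1 : Matrix (Fin n) (Fin n) ℝ)).det :=
      (Matrix.isUnit_iff_isUnit_det _).mp (aux_posdef _ hSpsd hε).isUnit
    have hdH : IsUnit (Bᵀ * B + ε • (1 : Matrix (Fin n) (Fin n) ℝ)).det :=
      (Matrix.isUnit_iff_isUnit_det _).mp (aux_posdef _ hS'psd hε).isUnit
    set Si := (B * Bᵀ + ε • (1 : Matrix (Fin n) (Fin n) ℝ))⁻¹ with hSidef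
    set Hi := (Bᵀ * B + ε • (1 : Matrix (Fin n) (Fin n) ℝ))⁻¹ with hHidef
    have hint : B * Hi = Si * B := aux_intertwine B hε
    have hsymS : (B * Bᵀ + ε • (1 : Matrix (Fin n) (Fin n) ℝ))ᵀ
        = B * Bᵀ + ε • (1 : Matrix (Fin n) (Fin n) ℝ) := by
      rw [Matrix.transpose_add, Matrix.transpose_smul, Matrix.transpose_one,
        Matrix.transpose_mul, Matrix.transpose_transpose]
    have hsymS' : (Bᵀ * B + ε • (1 : Matrix (Fin n) (Fin n) ℝ))ᵀ
        = Bᵀ * B + ε • (1 : Matrix (Fin n) (Fin n) ℝ) := by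
      rw [Matrix.transpose_add, Matrix.transpose_smul, Matrix.transpose_one,
        Matrix.transpose_mul, Matrix.transpose_transpose]
    have hSiT : Siᵀ = Si := by rw [hSidef, Matrix.transpose_nonsing_inv, hsymS]
    have hHiT : Hiᵀ = Hi := by rw [hHidef, Matrix.transpose_nonsing_inv, hsymS']
    have hintT : Hi * Bᵀ = Bᵀ * Si := by
      have h5 := congrArg Matrix.transpose hint
      rw [Matrix.transpose_mul B Hi, Matrix.transpose_mul Si B, hHiT, hSiT] at h5
      exact h5
    have hSiS : Si * (B * Bᵀ) = 1 - ε • Si := by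
      have h0 : Si * (B * Bᵀ + ε • (1 : Matrix (Fin n) (Fin n) ℝ)) = 1 :=
        Matrix.nonsing_inv_mul _ hdS
      rw [Matrix.mul_add, Matrix.mul_smul, Matrix.mul_one] at h0
      exact eq_sub_of_add_eq h0
    have hI1 : ∀ X : Matrix (Fin n) (Fin n) ℝ, B * (Hi * X) = Si * (B * X) := by
      intro X; rw [← Matrix.mul_assoc, hint, Matrix.mul_assoc]
    have hI2 : ∀ X : Matrix (Fin n) (Fin n) ℝ, Hi * (Bᵀ * X) = Bᵀ * (Si * X) := by
      intro X; rw [← Matrix.mul_assoc, hintT, Matrix.mul_assoc]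
    have hI3 : Si * (B * (Bᵀ * M)) = M - ε • (Si * M) := by
      calc Si * (B * (Bᵀ * M)) = (Si * (B * Bᵀ)) * M := by simp only [Matrix.mul_assoc]
        _ = M - ε • (Si * M) := by
            rw [hSiS, Matrix.sub_mul, one_mul, Matrix.smul_mul]
    have hexp : (M * B + ε • N) * Hi * (Bᵀ * M + ε • N)
        = M * ((1 - ε • Si) * M) + M * ((ε • Si) * (B * N))
          + N * (Bᵀ * ((ε • Si) * M)) + ε • (N * ((ε • Hi) * N)) := by
      calc (M * B + ε • N) * Hi * (Bᵀ * M + ε • N)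
          = M * (B * (Hi * (Bᵀ * M))) + ε • (M * (B * (Hi * N)))
            + ε • (N * (Hi * (Bᵀ * M))) + (ε * ε) • (N * (Hi * N)) := by
            simp only [Matrix.add_mul, Matrix.mul_add, Matrix.smul_mul, Matrix.mul_smul,
              smul_smul, smul_add, Matrix.mul_assoc]
            abel
        _ = M * (Si * (B * (Bᵀ * M))) + ε • (M * (Si * (B * N)))
            + ε • (N * (Bᵀ * (Si * M))) + (ε * ε) • (N * (Hi * N)) := by
            rw [hI1, hI1, hI2]
        _ = M * ((1 - ε • Si) * M) + M * ((ε • Si) * (B * N))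
            + N * (Bᵀ * ((ε • Si) * M)) + ε • (N * ((ε • Hi) * N)) := by
            rw [hI3]
            simp only [Matrix.mul_sub, Matrix.sub_mul, Matrix.one_mul, Matrix.mul_one,
              Matrix.smul_mul, Matrix.mul_smul, smul_smul, smul_add, smul_sub,
              Matrix.mul_assoc]
    set A := Q + ε • (1 : Matrix (Fin n) (Fin n) ℝ) with hAdef
    have hAN : A * N = M * B + ε • N := by
      rw [hAdef, Matrix.add_mul, Matrix.smul_mul, one_mul, hQN]
    have hNA : N * A = Bᵀ * M + ε • N := by
      rw [hAdef, Matrix.mul_add, Matrix.mul_smul, mul_one, hNQ]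
    rw [← hexp]
    -- now the inner matrix is A - (M*B + ε•N) * Hi * (Bᵀ*M + ε•N)
    have hHi_mul : Hi * (Bᵀ * B + ε • (1 : Matrix (Fin n) (Fin n) ℝ)) = 1 := by
      rw [hHidef]; exact Matrix.nonsing_inv_mul _ hdH
    have hmulHi : (Bᵀ * B + ε • (1 : Matrix (Fin n) (Fin n) ℝ)) * Hi = 1 := by
      rw [hHidef]; exact Matrix.mul_nonsing_inv _ hdH
    have hNHi : N * Hi = Hi * N := by
      have hc : (Bᵀ * B + ε • (1 : Matrix (Fin n) (Fin n) ℝ)) * N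
          = N * (Bᵀ * B + ε • (1 : Matrix (Fin n) (Fin n) ℝ)) := by
        rw [Matrix.add_mul, Matrix.mul_add, Matrix.smul_mul, Matrix.mul_smul, one_mul, mul_one,
          Matrix.mul_assoc Bᵀ B N, hBN, ← Matrix.mul_assoc N Bᵀ B, hNBt]
      calc N * Hi = Hi * (Bᵀ * B + ε • (1 : Matrix (Fin n) (Fin n) ℝ)) * N * Hi := by
            rw [hHi_mul, one_mul]
        _ = Hi * (N * ((Bᵀ * B + ε • (1 : Matrix (Fin n) (Fin n) ℝ)) * Hi)) := by
            rw [Matrix.mul_assoc Hi _ N, hc]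
            simp only [Matrix.mul_assoc]
        _ = Hi * N := by rw [hmulHi, mul_one]
    have s1 : N * (M * B + ε • N) = Bᵀ * B + ε • N := by
      rw [Matrix.mul_add, Matrix.mul_smul, hNN, ← Matrix.mul_assoc, ← hBt]
    have s2 : N * (Bᵀ * M + ε • N) = Bᵀ * M + ε • N := by
      rw [Matrix.mul_add, Matrix.mul_smul, hNN, ← Matrix.mul_assoc, hNBt]
    have s3 : (Bᵀ * B + ε • N) * (Hi * N) = N := by
      have e1 : N * (Hi * N) = Hi * N := by
        rw [← Matrix.mul_assoc, hNHi, Matrix.mul_assoc, hNN]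
      have e2 : (Bᵀ * B) * (Hi * N) = N - ε • (Hi * N) := by
        have h0 : (Bᵀ * B + ε • (1 : Matrix (Fin n) (Fin n) ℝ)) * (Hi * N) = N := by
          rw [← Matrix.mul_assoc, hmulHi, one_mul]
        rw [Matrix.add_mul, Matrix.smul_mul, one_mul] at h0
        exact eq_sub_of_add_eq h0
      rw [Matrix.add_mul, Matrix.smul_mul, e1, e2]
      abel
    have hNT : N * ((M * B + ε • N) * Hi * (Bᵀ * M + ε • N)) = Bᵀ * M + ε • N := by
      calc N * ((M * B + ε • N) * Hi * (Bᵀ * M + ε • N))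
          = (N * (M * B + ε • N)) * (Hi * (Bᵀ * M + ε • N)) := by simp only [Matrix.mul_assoc]
        _ = (Bᵀ * B + ε • N) * (Hi * (N * (Bᵀ * M + ε • N))) := by rw [s1, s2]
        _ = ((Bᵀ * B + ε • N) * (Hi * N)) * (Bᵀ * M + ε • N) := by
            simp only [Matrix.mul_assoc]
        _ = N * (Bᵀ * M + ε • N) := by rw [s3]
        _ = Bᵀ * M + ε • N := s2
    have hW : N * (A - (M * B + ε • N) * Hi * (Bᵀ * M + ε • N)) = 0 := by
      rw [Matrix.mul_sub, hNT, hNA, sub_self]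
    set W := A - (M * B + ε • N) * Hi * (Bᵀ * M + ε • N) with hWdef
    have e0 : (C * A⁻¹ * Cᵀ) * (Cpᵀ * W * Cp) = C * A⁻¹ * ((Cᵀ * Cpᵀ) * W) * Cp := by
      simp only [Matrix.mul_assoc]
    rw [e0, hCtCpt]
    have e1 : (1 - N) * W = W := by rw [Matrix.sub_mul, one_mul, hW, sub_zero]
    rw [e1, hWdef, ← hAN]
    have e2 : C * A⁻¹ * (A - A * N * Hi * (Bᵀ * M + ε • N)) * Cp
        = C * (A⁻¹ * A) * Cp
          - C * ((A⁻¹ * A) * (N * (Hi * ((Bᵀ * M + ε • N) * Cp)))) := by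
      simp only [Matrix.mul_sub, Matrix.sub_mul, Matrix.mul_assoc]
    rw [e2, Matrix.nonsing_inv_mul _ hdA, Matrix.mul_one, hCC, Matrix.one_mul,
      ← Matrix.mul_assoc C N, hCN, Matrix.zero_mul, sub_zero]
  refine ⟨fun ε hε => (Matrix.isUnit_iff_isUnit_det _).mpr
      (Matrix.isUnit_det_of_right_inverse (key ε hε)), ?_⟩
  -- the limit
  have t0 : Tendsto (fun ε : ℝ => ε) (nhdsWithin 0 (Set.Ioi 0)) (nhds 0) :=
    tendsto_id.mono_left nhdsWithin_le_nhds
  have tG : Tendsto (fun ε : ℝ => Cpᵀ * (Q + ε • (1 : Matrix (Fin n) (Fin n) ℝ)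
          - (M * ((1 - ε • (B * Bᵀ + ε • (1 : Matrix (Fin n) (Fin n) ℝ))⁻¹) * M)
            + M * ((ε • (B * Bᵀ + ε • (1 : Matrix (Fin n) (Fin n) ℝ))⁻¹) * (B * N))
            + N * (Bᵀ * ((ε • (B * Bᵀ + ε • (1 : Matrix (Fin n) (Fin n) ℝ))⁻¹) * M))
            + ε • (N * ((ε • (Bᵀ * B + ε • (1 : Matrix (Fin n) (Fin n) ℝ))⁻¹) * N)))) * Cp)
      (nhdsWithin 0 (Set.Ioi 0))
      (nhds (Cpᵀ * (Q + (0:ℝ) • (1 : Matrix (Fin n) (Fin n) ℝ)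
          - (M * ((1 - P1) * M) + M * (P1 * (B * N)) + N * (Bᵀ * (P1 * M))
            + (0:ℝ) • (N * (P2 * N)))) * Cp)) := by
    have hcont : Continuous (fun X : Matrix (Fin n) (Fin n) ℝ => Cpᵀ * X * Cp) :=
      (continuous_const.matrix_mul continuous_id).matrix_mul continuous_const
    apply (hcont.tendsto _).comp
    apply Tendsto.sub
    · exact tendsto_const_nhds.add (t0.smul tendsto_const_nhds)
    · exact (((tendsto_const_nhds.mul ((tendsto_const_nhds.sub hP1T).mul tendsto_const_nhds)).add
        (tendsto_const_nhds.mul (hP1T.mul tendsto_const_nhds))).add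
        (tendsto_const_nhds.mul (tendsto_const_nhds.mul (hP1T.mul tendsto_const_nhds)))).add
        (t0.smul (tendsto_const_nhds.mul (hP2T.mul tendsto_const_nhds)))
  have h1PB : (1 - P) * B = 0 := by
    have hPB : P * B = B := g1
    rw [Matrix.sub_mul, one_mul, hPB, sub_self]
  have hBt1P : Bᵀ * (1 - P) = 0 := by
    rw [Matrix.mul_sub, mul_one, hBtP, sub_self]
  have hlimval : Cpᵀ * (Q + (0:ℝ) • (1 : Matrix (Fin n) (Fin n) ℝ)
          - (M * ((1 - P1) * M) + M * (P1 * (B * N)) + N * (Bᵀ * (P1 * M))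
            + (0:ℝ) • (N * (P2 * N)))) * Cp
      = Cpᵀ * M * (1 - P) * M * Cp := by
    rw [hP1eq, sub_sub_cancel, hBN]
    rw [h1PB, Matrix.mul_zero]
    rw [← Matrix.mul_assoc Bᵀ (1 - P) M, hBt1P, Matrix.zero_mul, Matrix.mul_zero]
    rw [zero_smul, zero_smul, add_zero, add_zero, add_zero, add_zero]
    rw [← hMsq]
    simp only [Matrix.mul_sub, Matrix.sub_mul, Matrix.mul_one, Matrix.one_mul, Matrix.mul_assoc]
  rw [← hlimval]
  apply Tendsto.congr' _ tG
  filter_upwards [self_mem_nhdsWithin] with ε hε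
  exact (Matrix.inv_eq_right_inv (key ε (Set.mem_Ioi.mp hε))).symm
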